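/- Fix ρ ∈ (0,1] and define k̃ : [−1,1] → ℝ by k̃(u) = u + (ρ/π)(√(1−u²) − u·arccos u). Then k̃ maps [0,1] into [0,1], u = 1 is the unique fixed point of k̃ in [0,1], and for every u ∈ [0,1] the iterates k̃∘k̃∘⋯∘k̃(u) (L-fold composition) converge to 1 as L → ∞. -/
import Mathlib


/-- The normalized layer-to-layer kernel map of a deep random leaky-ReLU network,
k̃(u) = u + (ρ/π)(√(1−u²) − u·arccos u). -/
noncomputable def ktilde (ρ : ℝ) (u : ℝ) : ℝ :=
  u + ρ / Real.pi * (Real.sqrt (1 - u ^ 2) - u * Real.arccos u)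

namespace KtildeAux

open Real Set Filter

/-- g(u) = √(1−u²) − u·arccos u, via θ = arccos u: g = sin θ − cos θ · θ. -/
lemma g_pos {u : ℝ} (h0 : 0 ≤ u) (h1 : u < 1) :
    0 < Real.sqrt (1 - u ^ 2) - u * Real.arccos u := by
  have hs : Real.sqrt (1 - u ^ 2) = Real.sin (Real.arccos u) := (Real.sin_arccos u).symm
  rw [hs]
  have hθpos : 0 < Real.arccos u := Real.arccos_pos.mpr h1
  have hθle : Real.arccos u ≤ Real.pi / 2 := Real.arccos_le_pi_div_two.mpr h0
  rcases eq_or_lt_of_le hθle with heq | hlt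
  · -- θ = π/2, so u = cos θ = 0
    have hu : u = 0 := by
      have := Real.cos_arccos (by linarith : (-1:ℝ) ≤ u) h1.le
      rw [heq, Real.cos_pi_div_two] at this
      linarith [this]
    rw [hu]
    simp [Real.arccos_zero]
  · -- θ < π/2 : tan θ > θ, cos θ > 0
    have hcos : 0 < Real.cos (Real.arccos u) := by
      rw [Real.cos_arccos (by linarith) h1.le]
      rcases eq_or_lt_of_le h0 with h | h
      · exfalso
        have := Real.arccos_le_pi_div_two.mpr h0
        rw [← h, Real.arccos_zero] at hlt
        exact lt_irrefl _ hlt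
      · exact h
    have htan := Real.lt_tan hθpos hlt
    rw [Real.tan_eq_sin_div_cos] at htan
    have := (lt_div_iff₀ hcos).mp htan
    have hu : Real.cos (Real.arccos u) = u := Real.cos_arccos (by linarith) h1.le
    nlinarith

lemma g_nonneg {u : ℝ} (h0 : 0 ≤ u) (h1 : u ≤ 1) :
    0 ≤ Real.sqrt (1 - u ^ 2) - u * Real.arccos u := by
  have hs : Real.sqrt (1 - u ^ 2) = Real.sin (Real.arccos u) := (Real.sin_arccos u).symm
  rcases eq_or_lt_of_le h1 with heq | hlt
  · rw [heq]; simp [Real.arccos_one]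
  · exact (g_pos h0 hlt).le

lemma g_le {u : ℝ} (h0 : 0 ≤ u) (h1 : u ≤ 1) :
    Real.sqrt (1 - u ^ 2) - u * Real.arccos u ≤ Real.pi / 2 * (1 - u) := by
  have hs : Real.sqrt (1 - u ^ 2) = Real.sin (Real.arccos u) := (Real.sin_arccos u).symm
  rw [hs]
  have hθ0 : 0 ≤ Real.arccos u := Real.arccos_nonneg u
  have hθle : Real.arccos u ≤ Real.pi / 2 := Real.arccos_le_pi_div_two.mpr h0
  have hsle : Real.sin (Real.arccos u) ≤ Real.arccos u := Real.sin_le hθ0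
  nlinarith

lemma ktilde_one (ρ : ℝ) : ktilde ρ 1 = 1 := by
  simp [ktilde, Real.arccos_one]

lemma ktilde_ge {ρ u : ℝ} (hρ : 0 < ρ) (h0 : 0 ≤ u) (h1 : u ≤ 1) : u ≤ ktilde ρ u := by
  have := g_nonneg h0 h1
  have hπ : 0 < Real.pi := Real.pi_pos
  have : 0 ≤ ρ / Real.pi * (Real.sqrt (1 - u ^ 2) - u * Real.arccos u) := by positivity
  unfold ktilde; linarith

lemma ktilde_le_one {ρ u : ℝ} (hρ : 0 < ρ) (hρ1 : ρ ≤ 1) (h0 : 0 ≤ u) (h1 : u ≤ 1) :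
    ktilde ρ u ≤ 1 := by
  have hg0 := g_nonneg h0 h1
  have hgle := g_le h0 h1
  have hπ : 0 < Real.pi := Real.pi_pos
  have h2 : ρ / Real.pi * (Real.sqrt (1 - u ^ 2) - u * Real.arccos u)
      ≤ 1 / Real.pi * (Real.pi / 2 * (1 - u)) := by
    have hρπ : ρ / Real.pi ≤ 1 / Real.pi := by gcongr
    calc ρ / Real.pi * (Real.sqrt (1 - u ^ 2) - u * Real.arccos u)
        ≤ 1 / Real.pi * (Real.sqrt (1 - u ^ 2) - u * Real.arccos u) :=
          mul_le_mul_of_nonneg_right hρπ hg0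
      _ ≤ 1 / Real.pi * (Real.pi / 2 * (1 - u)) := by
          apply mul_le_mul_of_nonneg_left hgle; positivity
  have h3 : 1 / Real.pi * (Real.pi / 2 * (1 - u)) = (1 - u) / 2 := by
    field_simp
  unfold ktilde; rw [h3] at h2; linarith

lemma ktilde_mapsTo {ρ : ℝ} (hρ : 0 < ρ) (hρ1 : ρ ≤ 1) :
    Set.MapsTo (ktilde ρ) (Set.Icc 0 1) (Set.Icc 0 1) := by
  intro u hu
  exact ⟨hu.1.trans (ktilde_ge hρ hu.1 hu.2), ktilde_le_one hρ hρ1 hu.1 hu.2⟩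

lemma ktilde_fixed_unique {ρ : ℝ} (hρ : 0 < ρ) {u : ℝ} (hu : u ∈ Set.Icc (0:ℝ) 1)
    (hfix : ktilde ρ u = u) : u = 1 := by
  by_contra h
  have h1 : u < 1 := lt_of_le_of_ne hu.2 h
  have hg := g_pos hu.1 h1
  have hπ : 0 < Real.pi := Real.pi_pos
  have : 0 < ρ / Real.pi * (Real.sqrt (1 - u ^ 2) - u * Real.arccos u) := by positivity
  unfold ktilde at hfix; linarith

lemma ktilde_continuous (ρ : ℝ) : Continuous (ktilde ρ) := by
  unfold ktilde
  exact continuous_id.add (continuous_const.mul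
    (((Real.continuous_sqrt.comp (by fun_prop))).sub
      (continuous_id.mul Real.continuous_arccos)))

end KtildeAux

/-- k̃ maps [0,1] into [0,1], u = 1 is its unique fixed point in [0,1], and the
iterates of k̃ converge to 1 from any starting point in [0,1]. -/
theorem ktilde_iterates_converge (ρ : ℝ) (hρ : ρ ∈ Set.Ioc (0 : ℝ) 1) :
    Set.MapsTo (ktilde ρ) (Set.Icc 0 1) (Set.Icc 0 1) ∧
    (ktilde ρ 1 = 1 ∧ ∀ u ∈ Set.Icc (0 : ℝ) 1, ktilde ρ u = u → u = 1) ∧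
    ∀ u ∈ Set.Icc (0 : ℝ) 1,
      Filter.Tendsto (fun L : ℕ => (ktilde ρ)^[L] u) Filter.atTop (nhds 1) := by
  obtain ⟨hρ0, hρ1⟩ := hρ
  have hmap := KtildeAux.ktilde_mapsTo hρ0 hρ1
  refine ⟨hmap, ⟨KtildeAux.ktilde_one ρ, fun u hu hfix =>
    KtildeAux.ktilde_fixed_unique hρ0 hu hfix⟩, ?_⟩
  intro u hu
  set a : ℕ → ℝ := fun L => (ktilde ρ)^[L] u with ha
  have hmem : ∀ L, a L ∈ Set.Icc (0:ℝ) 1 := by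
    intro L
    induction L with
    | zero => exact hu
    | succ n ih =>
      have : a (n+1) = ktilde ρ (a n) := by
        simp only [ha, Function.iterate_succ_apply']
      rw [this]; exact hmap ih
  have hmono : Monotone a := by
    apply monotone_nat_of_le_succ
    intro n
    have : a (n+1) = ktilde ρ (a n) := by
      simp only [ha, Function.iterate_succ_apply']
    rw [this]
    exact KtildeAux.ktilde_ge hρ0 (hmem n).1 (hmem n).2
  have hbdd : BddAbove (Set.range a) := by
    refine ⟨1, ?_⟩
    rintro x ⟨L, rfl⟩
    exact (hmem L).2
  have htend : Filter.Tendsto a Filter.atTop (nhds (⨆ L, a L)) :=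
    tendsto_atTop_ciSup hmono hbdd
  set ℓ := ⨆ L, a L with hℓ
  have hℓmem : ℓ ∈ Set.Icc (0:ℝ) 1 := by
    constructor
    · exact le_ciSup hbdd 0 |>.trans' (hmem 0).1
    · exact ciSup_le fun L => (hmem L).2
  have hfix : ktilde ρ ℓ = ℓ := by
    have h1 : Filter.Tendsto (fun L => a (L + 1)) Filter.atTop (nhds ℓ) :=
      htend.comp (Filter.tendsto_add_atTop_nat 1)
    have h2 : Filter.Tendsto (fun L => ktilde ρ (a L)) Filter.atTop (nhds (ktilde ρ ℓ)) :=
      ((KtildeAux.ktilde_continuous ρ).continuousAt).tendsto.comp htend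
    have heq : (fun L => a (L + 1)) = fun L => ktilde ρ (a L) := by
      funext L
      simp only [ha, Function.iterate_succ_apply']
    rw [heq] at h1
    exact tendsto_nhds_unique h2 h1
  have : ℓ = 1 := KtildeAux.ktilde_fixed_unique hρ0 hℓmem hfix
  rw [← this]
  exact htend
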